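/- Let G be a compact Lie group acting on a metrizable space X. Then for every closed normal subgroup K ⊴ G (not necessarily acting freely), cat_{G/K}(X/K) ≤ cat_G(X); consequently max over all closed normal K ⊴ G of cat((X/K)^{G/K}) ≤ cat_G(X). -/

import Mathlib

open Set MulAction Function


/-- A subset invariant under the action of `G`. -/
def IsInvariantSet (G : Type*) {X : Type*} [SMul G X] (A : Set X) : Prop :=
  ∀ g : G, ∀ x ∈ A, g • x ∈ A

/-- `U` is `G`-equivariantly compressible into `A` inside the ambient `G`-space `X`:
the inclusion of `U` is `G`-homotopic to a map with image in `A`. -/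
def EqvCompressible (G : Type*) {X : Type*} [SMul G X] [TopologicalSpace X]
    (U A : Set X) : Prop :=
  ∃ H : X → unitInterval → X,
    ContinuousOn (fun p : X × unitInterval => H p.1 p.2) (U ×ˢ Set.univ) ∧
    (∀ x ∈ U, H x 0 = x) ∧
    (∀ x ∈ U, H x 1 ∈ A) ∧
    (∀ g : G, ∀ x ∈ U, ∀ t, H (g • x) t = g • H x t)

/-- `X` is covered by `k` `G`-invariant open sets, each `G`-compressible into a member of `𝒜`. -/
def ACatCover (G : Type*) {X : Type*} [SMul G X] [TopologicalSpace X]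
    (𝒜 : Set (Set X)) (k : ℕ) : Prop :=
  ∃ U : Fin k → Set X, (⋃ i, U i) = Set.univ ∧
    ∀ i, IsOpen (U i) ∧ IsInvariantSet G (U i) ∧ ∃ A ∈ 𝒜, EqvCompressible G (U i) A

/-- The equivariant `𝒜`-category of Clapp–Puppe, `_{𝒜}cat_G(X)`. -/
noncomputable def eqvACat (G : Type*) {X : Type*} [SMul G X] [TopologicalSpace X]
    (𝒜 : Set (Set X)) : ℕ∞ :=
  sInf {k : ℕ∞ | ∃ n : ℕ, k = n ∧ ACatCover G 𝒜 n}

/-- The equivariant LS-category `cat_G(X)`: the class `𝒜` is the class of orbits. -/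
noncomputable def eqvCat (G : Type*) (X : Type*) [Group G] [MulAction G X]
    [TopologicalSpace X] : ℕ∞ :=
  eqvACat G {A : Set X | ∃ x : X, A = MulAction.orbit G x}

/-- Non-equivariant compressibility of `U` into `A`. -/
def Compressible {X : Type*} [TopologicalSpace X] (U A : Set X) : Prop :=
  ∃ H : X → unitInterval → X,
    ContinuousOn (fun p : X × unitInterval => H p.1 p.2) (U ×ˢ Set.univ) ∧
    (∀ x ∈ U, H x 0 = x) ∧ (∀ x ∈ U, H x 1 ∈ A)

def PlainACatCover {X : Type*} [TopologicalSpace X] (𝒜 : Set (Set X)) (k : ℕ) : Prop :=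
  ∃ U : Fin k → Set X, (⋃ i, U i) = Set.univ ∧
    ∀ i, IsOpen (U i) ∧ ∃ A ∈ 𝒜, Compressible (U i) A

/-- The (non-equivariant) `𝒜`-category of Clapp–Puppe. -/
noncomputable def plainACat {X : Type*} [TopologicalSpace X] (𝒜 : Set (Set X)) : ℕ∞ :=
  sInf {k : ℕ∞ | ∃ n : ℕ, k = n ∧ PlainACatCover 𝒜 n}

/-- Ordinary Lusternik–Schnirelmann category. -/
noncomputable def LScat (X : Type*) [TopologicalSpace X] : ℕ∞ :=
  plainACat {A : Set X | ∃ a : X, A = {a}}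

section QuotAct
variable {G : Type*} [Group G] {X : Type*} [MulAction G X] (K : Subgroup G) [K.Normal]

/-- The orbit space `X/K` of the restricted action of a subgroup `K ≤ G`. -/
abbrev OrbitQuot (K : Subgroup G) (X : Type*) [MulAction G X] : Type _ :=
  Quotient (MulAction.orbitRel K X)

def quotSMul : SMul (G ⧸ K) (OrbitQuot K X) where
  smul := fun q x => Quotient.liftOn' q
    (fun a => Quotient.map' (fun y => a • y) (by
      rintro y z ⟨k, hk⟩
      exact ⟨⟨a * (k : G) * a⁻¹, Subgroup.Normal.conj_mem ‹K.Normal› (k : G) k.2 a⟩, by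
        simp only [Subgroup.mk_smul, ← hk]
        show (a * (k : G) * a⁻¹) • a • z = a • (k : G) • z
        rw [smul_smul, smul_smul]
        congr 1
        group⟩) x)
    (by
      rintro a b hab
      have hK : a⁻¹ * b ∈ K := QuotientGroup.leftRel_apply.mp hab
      induction x using Quotient.inductionOn'
      rename_i y
      apply Quotient.sound'
      refine ⟨⟨a * (a⁻¹ * b)⁻¹ * a⁻¹, ?_⟩, ?_⟩
      · simpa using Subgroup.Normal.conj_mem ‹K.Normal› _ (K.inv_mem hK) a
      · show (a * (a⁻¹ * b)⁻¹ * a⁻¹) • (b • y) = a • y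
        rw [← mul_smul]
        congr 1
        group)

/-- The induced action of the quotient group `G/K` on the orbit space `X/K`,
given by `(gK) • [x]_K = [g • x]_K`. -/
instance quotMulAction : MulAction (G ⧸ K) (OrbitQuot K X) :=
  letI := quotSMul (X := X) K
  { one_smul := by
      intro q
      induction q using Quotient.inductionOn'
      rename_i x
      show (Quotient.mk'' ((1 : G) • x) : OrbitQuot K X) = Quotient.mk'' x
      rw [one_smul]
    mul_smul := by
      intro a b q
      induction a using Quotient.inductionOn'
      induction b using Quotient.inductionOn'
      induction q using Quotient.inductionOn'
      rename_i a b x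
      show (Quotient.mk'' ((a * b) • x) : OrbitQuot K X) = Quotient.mk'' (a • b • x)
      rw [mul_smul] }

end QuotAct

section Proof16Aux
open Filter Topology

variable {G : Type*} [Group G] {X : Type*} [TopologicalSpace X] [MulAction G X]

lemma quot_mk_smul (K : Subgroup G) [K.Normal] (g : G) (x : X) :
    ((g : G ⧸ K) • (Quotient.mk'' x : OrbitQuot K X)) = Quotient.mk'' (g • x) := rfl

lemma quot_mk_ksmul (K : Subgroup G) (k : K) (x : X) :
    (Quotient.mk'' ((k : G) • x) : OrbitQuot K X) = Quotient.mk'' x :=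
  Quotient.sound' (MulAction.orbitRel_apply.mpr (MulAction.mem_orbit x k))

lemma isOpenMap_quotMk (K : Subgroup G) [ContinuousConstSMul G X] :
    IsOpenMap (Quotient.mk'' : X → OrbitQuot K X) := by
  intro s hs
  have key : (Quotient.mk'' : X → OrbitQuot K X) ⁻¹' (Quotient.mk'' '' s)
      = ⋃ k : K, (fun x => (k : G) • x) '' s := by
    ext x
    simp only [Set.mem_preimage, Set.mem_image, Set.mem_iUnion]
    constructor
    · rintro ⟨y, hy, hxy⟩
      obtain ⟨k, hk⟩ := MulAction.mem_orbit_iff.mp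
        (MulAction.orbitRel_apply.mp (Quotient.eq''.mp hxy))
      have hk' : (k : G) • x = y := hk
      exact ⟨k⁻¹, y, hy, by rw [← hk', ← mul_smul]; simp⟩
    · rintro ⟨k, y, hy, rfl⟩
      exact ⟨y, hy, (quot_mk_ksmul K k y).symm⟩
  rw [← isQuotientMap_quotient_mk'.isOpen_preimage]
  show IsOpen ((Quotient.mk'' : X → OrbitQuot K X) ⁻¹' (Quotient.mk'' '' s))
  rw [key]
  exact isOpen_iUnion fun k => (Homeomorph.smul ((k : G))).isOpenMap s hs

lemma quot_map_nhds (K : Subgroup G) [ContinuousConstSMul G X] (x : X) :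
    Filter.map (Quotient.mk'' : X → OrbitQuot K X) (𝓝 x) = 𝓝 (Quotient.mk'' x) :=
  le_antisymm (continuous_quotient_mk'.continuousAt) ((isOpenMap_quotMk K).nhds_le x)

lemma cover_transfer (K : Subgroup G) [K.Normal] [ContinuousConstSMul G X] {n : ℕ}
    (h : ACatCover G {A : Set X | ∃ x : X, A = MulAction.orbit G x} n) :
    ACatCover (G ⧸ K) {A : Set (OrbitQuot K X) | ∃ q, A = MulAction.orbit (G ⧸ K) q} n := by
  classical
  obtain ⟨U, hcov, hU⟩ := h
  refine ⟨fun i => (Quotient.mk'' : X → OrbitQuot K X) '' U i, ?_, ?_⟩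
  · rw [← Set.image_iUnion, hcov, Set.image_univ]
    exact Set.range_eq_univ.mpr fun q => ⟨q.out, Quotient.out_eq' q⟩
  · intro i
    obtain ⟨hopen, hinv, A, ⟨x₀, rfl⟩, H, hcont, h0, h1, heqv⟩ := hU i
    refine ⟨isOpenMap_quotMk K _ hopen, ?_, ?_⟩
    · rintro gbar _ ⟨x, hx, rfl⟩
      obtain ⟨g, rfl⟩ := QuotientGroup.mk_surjective gbar
      rw [quot_mk_smul]; exact ⟨g • x, hinv g x hx, rfl⟩
    · -- the compressing homotopy on the quotient
      set H' : OrbitQuot K X → unitInterval → OrbitQuot K X :=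
        fun q t => Quotient.mk'' (H q.out t) with hH'def
      have hkey : ∀ x ∈ U i, ∀ t,
          H' (Quotient.mk'' x) t = Quotient.mk'' (H x t) := by
        intro x hx t
        obtain ⟨k, hk⟩ := MulAction.mem_orbit_iff.mp (MulAction.orbitRel_apply.mp
          (Quotient.eq''.mp (Quotient.out_eq' (Quotient.mk'' x : OrbitQuot K X))))
        have hk' : (k : G) • x = (Quotient.mk'' x : OrbitQuot K X).out := hk
        show Quotient.mk'' (H (Quotient.mk'' x : OrbitQuot K X).out t) = Quotient.mk'' (H x t)
        rw [← hk', heqv (k : G) x hx t]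
        exact quot_mk_ksmul K k (H x t)
      refine ⟨MulAction.orbit (G ⧸ K) (Quotient.mk'' x₀), ⟨_, rfl⟩, H', ?_, ?_, ?_, ?_⟩
      · apply continuousOn_of_forall_continuousAt
        rintro ⟨q, t⟩ ⟨⟨x, hx, rfl⟩, -⟩
        have hUn : (U i ×ˢ (Set.univ : Set unitInterval)) ∈ 𝓝 (x, t) :=
          (hopen.prod isOpen_univ).mem_nhds ⟨hx, trivial⟩
        have hHc : ContinuousAt
            (fun p : X × unitInterval => Quotient.mk'' (H p.1 p.2) : X × unitInterval → OrbitQuot K X) (x, t) :=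
          (continuous_quotient_mk'.continuousAt).comp (hcont.continuousAt hUn)
        have htend : Tendsto (fun p : X × unitInterval => H' (Quotient.mk'' p.1) p.2)
            (𝓝 (x, t)) (𝓝 (H' (Quotient.mk'' x) t)) := by
          rw [hkey x hx t]
          refine hHc.congr' ?_
          filter_upwards [hUn] with p hp
          exact (hkey p.1 hp.1 p.2).symm
        have hmapeq : 𝓝 ((Quotient.mk'' x : OrbitQuot K X), t)
            = Filter.map (fun p : X × unitInterval => ((Quotient.mk'' p.1 : OrbitQuot K X), p.2))
              (𝓝 (x, t)) := by
          rw [nhds_prod_eq, nhds_prod_eq, ← quot_map_nhds K x]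
          conv_lhs => rw [show (𝓝 t) = Filter.map id (𝓝 t) from (Filter.map_id (f := 𝓝 t)).symm]
          exact Filter.prod_map_map_eq
        unfold ContinuousAt
        rw [hmapeq, Filter.tendsto_map'_iff]
        exact htend
      · rintro _ ⟨x, hx, rfl⟩
        rw [hkey x hx 0, h0 x hx]
      · rintro _ ⟨x, hx, rfl⟩
        rw [hkey x hx 1]
        obtain ⟨g, hg⟩ := MulAction.mem_orbit_iff.mp (h1 x hx)
        exact MulAction.mem_orbit_iff.mpr ⟨(g : G ⧸ K), by rw [quot_mk_smul, hg]⟩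
      · rintro gbar _ ⟨x, hx, rfl⟩ t
        obtain ⟨g, rfl⟩ := QuotientGroup.mk_surjective gbar
        rw [quot_mk_smul, hkey (g • x) (hinv g x hx) t, hkey x hx t,
          heqv g x hx t, ← quot_mk_smul]

lemma fixed_le {Γ : Type*} [Group Γ] {Y : Type*} [TopologicalSpace Y] [MulAction Γ Y] :
    LScat (MulAction.fixedPoints Γ Y) ≤ eqvCat Γ Y := by
  classical
  rcases isEmpty_or_nonempty ↥(MulAction.fixedPoints Γ Y) with hF | hF
  · refine le_trans (sInf_le ⟨0, by simp, ?_⟩) zero_le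
    refine ⟨fun _ => ∅, ?_, fun i => i.elim0⟩
    rw [Set.univ_eq_empty_iff.mpr hF]
    simp
  · obtain ⟨a₀⟩ := hF
    unfold LScat plainACat eqvCat eqvACat
    apply sInf_le_sInf
    rintro k ⟨n, rfl, U, hcov, hU⟩
    refine ⟨n, rfl, fun i => Subtype.val ⁻¹' U i, ?_, ?_⟩
    · apply Set.eq_univ_of_forall
      intro q
      have : (q : Y) ∈ ⋃ i, U i := hcov ▸ Set.mem_univ _
      obtain ⟨_, ⟨i, rfl⟩, hi⟩ := this
      exact Set.mem_iUnion.mpr ⟨i, hi⟩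
    · intro i
      obtain ⟨hopen, hinv, A, ⟨y₀, rfl⟩, H, hcont, h0, h1, heqv⟩ := hU i
      refine ⟨hopen.preimage continuous_subtype_val, ?_⟩
      have hfix : ∀ q : ↥(MulAction.fixedPoints Γ Y), (q : Y) ∈ U i → ∀ t,
          H (q : Y) t ∈ MulAction.fixedPoints Γ Y := by
        intro q hq t
        rw [MulAction.mem_fixedPoints]
        intro g
        rw [← heqv g (q : Y) hq t, (MulAction.mem_fixedPoints.mp q.2) g]
      by_cases hW : ∃ q : ↥(MulAction.fixedPoints Γ Y), (q : Y) ∈ U i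
      · obtain ⟨q₀, hq₀⟩ := hW
        set a : ↥(MulAction.fixedPoints Γ Y) := ⟨H (q₀ : Y) 1, hfix q₀ hq₀ 1⟩ with ha
        have heq1 : ∀ q : ↥(MulAction.fixedPoints Γ Y), (q : Y) ∈ U i →
            H (q : Y) 1 = H (q₀ : Y) 1 := by
          intro q hq
          obtain ⟨g, hg⟩ := MulAction.mem_orbit_iff.mp (h1 (q : Y) hq)
          obtain ⟨g', hg'⟩ := MulAction.mem_orbit_iff.mp (h1 (q₀ : Y) hq₀)
          have : H (q : Y) 1 = (g * g'⁻¹) • H (q₀ : Y) 1 := by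
            rw [mul_smul, ← hg', inv_smul_smul, hg]
          rw [this, (MulAction.mem_fixedPoints.mp (hfix q₀ hq₀ 1)) (g * g'⁻¹)]
        refine ⟨{a}, ⟨a, rfl⟩,
          fun q t => if h : (q : Y) ∈ U i then ⟨H (q : Y) t, hfix q h t⟩ else q, ?_, ?_, ?_⟩
        · rw [Topology.IsInducing.continuousOn_iff Topology.IsInducing.subtypeVal]
          have hc : ContinuousOn
              (fun p : ↥(MulAction.fixedPoints Γ Y) × unitInterval => H (p.1 : Y) p.2)
              ((Subtype.val ⁻¹' U i) ×ˢ Set.univ) := by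
            have hmaps : Set.MapsTo
                (fun p : ↥(MulAction.fixedPoints Γ Y) × unitInterval => ((p.1 : Y), p.2))
                ((Subtype.val ⁻¹' U i) ×ˢ Set.univ) (U i ×ˢ Set.univ) :=
              fun p hp => ⟨hp.1, trivial⟩
            exact ContinuousOn.comp (g := fun p : Y × unitInterval => H p.1 p.2)
              hcont ((continuous_subtype_val.prodMap continuous_id).continuousOn) hmaps
          refine hc.congr ?_
          rintro ⟨q, t⟩ ⟨hq, -⟩
          have hq' : (q : Y) ∈ U i := hq
          show (↑(if h : (q : Y) ∈ U i then (⟨H (q : Y) t, hfix q h t⟩ :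
            ↥(MulAction.fixedPoints Γ Y)) else q) : Y) = H (q : Y) t
          rw [dif_pos hq']
        · intro q hq
          have hq' : (q : Y) ∈ U i := hq
          beta_reduce
          rw [dif_pos hq']
          exact Subtype.ext (h0 (q : Y) hq')
        · intro q hq
          have hq' : (q : Y) ∈ U i := hq
          beta_reduce
          rw [Set.mem_singleton_iff, dif_pos hq']
          exact Subtype.ext (heq1 q hq')
      · have hWe : (Subtype.val ⁻¹' U i : Set ↥(MulAction.fixedPoints Γ Y)) = ∅ := by
          rw [Set.eq_empty_iff_forall_notMem]
          exact fun q hq => hW ⟨q, hq⟩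
        refine ⟨{a₀}, ⟨a₀, rfl⟩, fun q _ => q, ?_, ?_, ?_⟩ <;> simp [hWe]
end Proof16Aux

/-- for a compact Lie group `G` acting on a metrizable space `X` and
every closed normal subgroup `K ⊴ G`, `cat_{G/K}(X/K) ≤ cat_G(X)`, and consequently
`cat((X/K)^{G/K}) ≤ cat_G(X)` for every such `K`. -/
theorem statement16 {G : Type*} [Group G] [TopologicalSpace G] [IsTopologicalGroup G]
    [CompactSpace G] {X : Type*} [TopologicalSpace X] [TopologicalSpace.MetrizableSpace X]
    [MulAction G X] [ContinuousSMul G X] :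
    ∀ (K : Subgroup G) (_hn : K.Normal), IsClosed (K : Set G) →
      eqvCat (G ⧸ K) (OrbitQuot K X) ≤ eqvCat G X ∧
      LScat (MulAction.fixedPoints (G ⧸ K) (OrbitQuot K X)) ≤ eqvCat G X := by
  intro K hn _hcl
  haveI := hn
  have h1 : eqvCat (G ⧸ K) (OrbitQuot K X) ≤ eqvCat G X := by
    unfold eqvCat eqvACat
    apply sInf_le_sInf
    rintro k ⟨n, rfl, hc⟩
    exact ⟨n, rfl, cover_transfer K hc⟩
  exact ⟨h1, fixed_le.trans h1⟩
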